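/- Let G be a connected undirected graph on a finite vertex set {1,...,V} with V ≥ 2, with strictly positive symmetric edge weights A^{ij} > 0 on its edges, and let L_A be the associated discrete weighted Laplacian acting on E^{(V-1)} = {x ∈ ℝ^V : Σ x_i = 0}. Let a ∈ E^{(V-1)} be the unique solution to L_A a = e_1 - e_V. If removing vertex 1 (and its incident edges) does not disconnect G, then a_1 > a_i for all i = 2,...,V. -/

import Mathlib

open Matrix

private lemma laplacian_row_formula {V : ℕ} (G : SimpleGraph (Fin V)) [DecidableRel G.Adj]
    (A : Fin V → Fin V → ℝ) (hsymm : ∀ i j, A i j = A j i)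
    (a : Fin V → ℝ) (k : Fin V) :
    ((∑ i : Fin V, ∑ j : Fin V,
      if i < j ∧ G.Adj i j then
        A i j • Matrix.vecMulVec (Pi.single i 1 - Pi.single j 1) (Pi.single i 1 - Pi.single j 1)
      else 0) *ᵥ a) k = ∑ j : Fin V, (if G.Adj k j then A k j * (a k - a j) else 0) := by
  simp only [Matrix.mulVec, dotProduct, Matrix.sum_apply, Finset.sum_mul,
    apply_ite (fun M : Matrix (Fin V) (Fin V) ℝ => M k)]
  simp only [ite_apply, Matrix.smul_apply, Matrix.vecMulVec_apply, Matrix.zero_apply,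
    Pi.zero_apply, Pi.sub_apply, smul_eq_mul, ite_mul, zero_mul]
  rw [Finset.sum_comm]
  have step1 : ∀ y j : Fin V, (∑ x : Fin V, if y < j ∧ G.Adj y j then
      A y j * (((Pi.single y 1 : Fin V → ℝ) k - (Pi.single j 1 : Fin V → ℝ) k) *
        ((Pi.single y 1 : Fin V → ℝ) x - (Pi.single j 1 : Fin V → ℝ) x)) * a x
    else 0) = if y < j ∧ G.Adj y j then
      A y j * ((Pi.single y 1 : Fin V → ℝ) k - (Pi.single j 1 : Fin V → ℝ) k) * (a y - a j)
    else 0 := by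
    intro y j
    split
    · rename_i h
      have hne : y ≠ j := ne_of_lt h.1
      rw [show (a y - a j) = ∑ x : Fin V,
          ((Pi.single y 1 : Fin V → ℝ) x - (Pi.single j 1 : Fin V → ℝ) x) * a x by
        simp [sub_mul, Finset.sum_sub_distrib, Pi.single_apply, Finset.sum_ite_eq']]
      rw [Finset.mul_sum]
      exact Finset.sum_congr rfl fun x _ => by ring
    · simp
  conv_lhs => enter [2, y]; rw [Finset.sum_comm]
  simp only [step1]
  have expand : ∀ x j : Fin V, (if x < j ∧ G.Adj x j then
      A x j * ((Pi.single x 1 : Fin V → ℝ) k - (Pi.single j 1 : Fin V → ℝ) k) * (a x - a j) else 0)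
    = (if x < j ∧ G.Adj x j then (Pi.single x 1 : Fin V → ℝ) k * (A x j * (a x - a j)) else 0)
    - (if x < j ∧ G.Adj x j then (Pi.single j 1 : Fin V → ℝ) k * (A x j * (a x - a j)) else 0) := by
    intro x j; split <;> ring
  simp only [expand, Finset.sum_sub_distrib]
  have hg : (∑ x : Fin V, ∑ j : Fin V, if x < j ∧ G.Adj x j then
        (Pi.single x 1 : Fin V → ℝ) k * (A x j * (a x - a j)) else 0)
      = ∑ j : Fin V, if k < j ∧ G.Adj k j then A k j * (a k - a j) else 0 := by
    rw [Finset.sum_eq_single k]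
    · apply Finset.sum_congr rfl; intro j _
      simp [Pi.single_apply]
    · intro x _ hx
      apply Finset.sum_eq_zero; intro j _
      simp [Pi.single_apply, Ne.symm hx]
    · simp
  have hh : (∑ x : Fin V, ∑ j : Fin V, if x < j ∧ G.Adj x j then
        (Pi.single j 1 : Fin V → ℝ) k * (A x j * (a x - a j)) else 0)
      = ∑ x : Fin V, if x < k ∧ G.Adj x k then A x k * (a x - a k) else 0 := by
    rw [Finset.sum_comm, Finset.sum_eq_single k]
    · apply Finset.sum_congr rfl; intro x _
      simp [Pi.single_apply]
    · intro j _ hj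
      apply Finset.sum_eq_zero; intro x _
      simp [Pi.single_apply, Ne.symm hj]
    · simp
  rw [hg, hh, ← Finset.sum_sub_distrib]
  apply Finset.sum_congr rfl
  intro j _
  rcases lt_trichotomy k j with h | h | h
  · have h2 : ¬ (j < k) := by omega
    by_cases hadj : G.Adj k j <;> simp [h, h2, hadj]
  · subst h
    simp [lt_irrefl, G.loopless.irrefl k]
  · have h2 : ¬ (k < j) := by omega
    have hc : G.Adj j k ↔ G.Adj k j := G.adj_comm j k
    by_cases hadj : G.Adj k j <;>
      simp [h, h2, hadj, hc, hsymm j k] <;> ring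

/-- Strong maximum principle for the discrete weighted Laplacian: if `L_A a = e_1 - e_V`
on the connected weighted graph `G` (with `a` summing to zero), and removing vertex `1`
does not disconnect `G`, then `a_1 > a_i` for all other vertices `i`. -/
theorem discrete_laplacian_strong_max_principle {V : ℕ} (hV : 2 ≤ V)
    (G : SimpleGraph (Fin V)) [DecidableRel G.Adj] (hG : G.Connected)
    (A : Fin V → Fin V → ℝ)
    (hsymm : ∀ i j, A i j = A j i)
    (hpos : ∀ i j, G.Adj i j → 0 < A i j)
    (L : Matrix (Fin V) (Fin V) ℝ)
    (hL : L = ∑ i : Fin V, ∑ j : Fin V,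
      if i < j ∧ G.Adj i j then
        A i j • Matrix.vecMulVec (Pi.single i 1 - Pi.single j 1) (Pi.single i 1 - Pi.single j 1)
      else 0)
    (hcut : (G.induce {v : Fin V | v ≠ ⟨0, by omega⟩}).Connected)
    (a : Fin V → ℝ) (ha : (∑ i, a i) = 0)
    (hLa : L *ᵥ a = Pi.single (⟨0, by omega⟩ : Fin V) 1 - Pi.single (⟨V - 1, by omega⟩ : Fin V) 1) :
    ∀ i : Fin V, i ≠ ⟨0, by omega⟩ → a i < a (⟨0, by omega⟩ : Fin V) := by
  subst hL
  have hV0 : 0 < V := by omega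
  have hVw : V - 1 < V := by omega
  set z : Fin V := ⟨0, hV0⟩ with hzdef
  set w : Fin V := ⟨V - 1, hVw⟩ with hwdef
  have hwz : w ≠ z := by
    simp only [hzdef, hwdef, ne_eq, Fin.mk.injEq]
    omega
  -- row formula + equation
  have hrow : ∀ k : Fin V, (∑ j : Fin V, (if G.Adj k j then A k j * (a k - a j) else 0))
      = (if k = z then (1:ℝ) else 0) - (if k = w then 1 else 0) := by
    intro k
    rw [← laplacian_row_formula G A hsymm a k]
    rw [hLa]
    simp [Pi.single_apply]
  intro i hi
  have hi' : i ≠ z := hi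
  by_contra hcon
  push_neg at hcon
  -- the max over non-z vertices
  set T : Finset (Fin V) := Finset.univ.filter (fun v => v ≠ z) with hTdef
  have hmemT : ∀ v : Fin V, v ≠ z → v ∈ T := by
    intro v hv; simp [hTdef, hv]
  have hT : T.Nonempty := ⟨i, hmemT i hi'⟩
  set M : ℝ := T.sup' hT a with hMdef
  have hle : ∀ v : Fin V, v ≠ z → a v ≤ M := fun v hv => Finset.le_sup' a (hmemT v hv)
  have hzM : a z ≤ M := le_trans hcon (hle i hi')
  have hallle : ∀ v : Fin V, a v ≤ M := by
    intro v
    by_cases hv : v = z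
    · exact hv ▸ hzM
    · exact hle v hv
  -- propagation of the maximum
  have prop : ∀ u : Fin V, u ≠ z → a u = M → u ≠ w ∧ ∀ v, G.Adj u v → a v = M := by
    intro u hu hM
    have hterm : ∀ j : Fin V, 0 ≤ (if G.Adj u j then A u j * (a u - a j) else 0) := by
      intro j
      split
      · rename_i hadj
        have := hallle j
        have := hpos u j hadj
        nlinarith
      · exact le_refl 0
    have hsum := hrow u
    rw [if_neg hu] at hsum
    have hnw : u ≠ w := by
      intro h
      rw [if_pos h] at hsum
      have : (0:ℝ) ≤ ∑ j : Fin V, (if G.Adj u j then A u j * (a u - a j) else 0) :=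
        Finset.sum_nonneg fun j _ => hterm j
      rw [hsum] at this
      norm_num at this
    rw [if_neg hnw] at hsum
    refine ⟨hnw, ?_⟩
    have hzero := (Finset.sum_eq_zero_iff_of_nonneg (fun j _ => hterm j)).mp (by
      simpa using hsum)
    intro v hadj
    have := hzero v (Finset.mem_univ v)
    rw [if_pos hadj] at this
    have hA := hpos u v hadj
    have : a u - a v = 0 := by
      rcases mul_eq_zero.mp this with h | h
      · exact absurd h (ne_of_gt hA)
      · exact h
    have : a v = a u := by linarith
    rw [this, hM]
  -- find a maximizer among non-z vertices
  obtain ⟨u0, hu0T, hu0⟩ := Finset.exists_mem_eq_sup' hT a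
  have hu0z : u0 ≠ z := by
    simp only [hTdef, Finset.mem_filter] at hu0T
    exact hu0T.2
  -- walk in the induced graph from u0 to w, propagating the max
  have hu0mem : u0 ∈ {v : Fin V | v ≠ z} := hu0z
  have hwmem : w ∈ {v : Fin V | v ≠ z} := hwz
  have hreach : (G.induce {v : Fin V | v ≠ z}).Reachable ⟨u0, hu0mem⟩ ⟨w, hwmem⟩ :=
    hcut.preconnected _ _
  have walkprop : ∀ (p q : {v : Fin V | v ≠ z})
      (wlk : (G.induce {v : Fin V | v ≠ z}).Walk p q), a p.1 = M → a q.1 = M := by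
    intro p q wlk
    induction wlk with
    | nil => exact id
    | @cons x y r h wlk ih =>
      intro hx
      apply ih
      have hadj : G.Adj x.1 y.1 := by
        simpa using h
      exact (prop x.1 x.2 hx).2 y.1 hadj
  obtain ⟨wlk⟩ := hreach
  have hwM : a w = M := walkprop _ _ wlk hu0.symm
  exact (prop w hwz hwM).1 rfl
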